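/- For every M>1 there exist constants K>0 and δ>0 such that for all i≥1, all ℓ∈{1,…,d}, and all θ,θ', the partial derivative ∂C_i/∂θ_ℓ of the sliced U(1)^d gauge-invariant propagator satisfies |∂C_i/∂θ_ℓ (θ;θ')| ≤ K M^{(d-1)i} ∫ dλ e^{-δ M^i Σ_k |θ_k - θ'_k + λ|}. -/

import Mathlib

open Real MeasureTheory
open Topology Filter

set_option maxHeartbeats 1000000

/-- The heat kernel on U(1) ≅ ℝ/2πℤ at time α (winding-number representation). -/
noncomputable def heatK (α θ : ℝ) : ℝ :=
  ∑' n : ℤ, (1 / Real.sqrt (4 * π * α)) * Real.exp (-(θ + 2 * π * n) ^ 2 / (4 * α))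

/-- Distance on the circle of circumference 2π. -/
noncomputable def circleDist (x : ℝ) : ℝ := sInf {y : ℝ | ∃ n : ℤ, y = |x - 2 * π * n|}

/-- The `i`-th slice of the gauge-averaged propagator of the U(1)^d TGFT. -/
noncomputable def slicedProp (d : ℕ) (m M : ℝ) (i : ℕ) (θ θ' : Fin d → ℝ) : ℝ :=
  ∫ α in (M ^ (-(2 : ℝ) * (i : ℝ)))..(M ^ (-(2 : ℝ) * ((i : ℝ) - 1))),
    Real.exp (-α * m ^ 2) *
      ∫ lam in (0 : ℝ)..(2 * π), ∏ ℓ : Fin d, heatK α (θ ℓ - θ' ℓ + lam)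


lemma int_geom_hasSum {r : ℝ} (h0 : 0 ≤ r) (h1 : r < 1) :
    HasSum (fun n : ℤ => r ^ n.natAbs) ((1 - r)⁻¹ + (1 - r)⁻¹ * r) := by
  have h₁ : HasSum (fun n : ℕ => r ^ n) (1 - r)⁻¹ := hasSum_geometric_of_lt_one h0 h1
  have key : ∀ n : ℕ, ((-((n : ℤ) + 1))).natAbs = n + 1 := by
    intro n
    rw [Int.natAbs_neg]
    exact_mod_cast Int.natAbs_natCast (n + 1)
  have h₂ : HasSum (fun n : ℕ => r ^ ((-((n : ℤ) + 1))).natAbs) ((1 - r)⁻¹ * r) := by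
    have h3 := h₁.mul_right r
    have he : (fun n : ℕ => r ^ ((-((n : ℤ) + 1))).natAbs) = fun n : ℕ => r ^ n * r := by
      funext n; rw [key n, pow_succ]
    rw [he]; exact h3
  have h₁' : HasSum (fun n : ℕ => r ^ ((n : ℤ)).natAbs) ((1 - r)⁻¹) := by
    have he : (fun n : ℕ => r ^ ((n : ℤ)).natAbs) = fun n : ℕ => r ^ n := by
      funext n; rw [Int.natAbs_natCast]
    rw [he]; exact h₁
  exact HasSum.of_nat_of_neg_add_one h₁' h₂

lemma int_geom_summable {r : ℝ} (h0 : 0 ≤ r) (h1 : r < 1) :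
    Summable (fun n : ℤ => r ^ n.natAbs) := ⟨_, int_geom_hasSum h0 h1⟩

lemma int_geom_tsum_le {r : ℝ} (h0 : 0 ≤ r) (h1 : r < 1) :
    ∑' n : ℤ, r ^ n.natAbs ≤ 2 * (1 - r)⁻¹ := by
  rw [(int_geom_hasSum h0 h1).tsum_eq]
  have hr : 0 < 1 - r := by linarith
  have h2 : (1 - r)⁻¹ * r ≤ (1 - r)⁻¹ * 1 :=
    mul_le_mul_of_nonneg_left (le_of_lt h1) (by positivity)
  nlinarith [inv_nonneg.mpr hr.le]

lemma natAbs_sq_cast (n : ℤ) : ((n.natAbs : ℝ)) ^ 2 = (n : ℝ) ^ 2 := by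
  push_cast [Nat.cast_natAbs]
  exact sq_abs _

lemma natAbs_le_sq (n : ℤ) : ((n.natAbs : ℝ)) ≤ (n : ℝ) ^ 2 := by
  rw [← natAbs_sq_cast]
  have : (1 : ℝ) ≤ (n.natAbs : ℝ) ∨ ((n.natAbs : ℝ)) = 0 := by
    rcases Nat.eq_zero_or_pos n.natAbs with h | h
    · right; exact_mod_cast h
    · left; exact_mod_cast h
  rcases this with h | h
  · nlinarith
  · rw [h]; norm_num

/-- pointwise comparison used everywhere -/
lemma gauss_term_le (c x : ℝ) (hc : 0 < c) (n : ℤ) :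
    rexp (-(x + 2 * π * n) ^ 2 / c) ≤ rexp (x ^ 2 / c) * rexp (-(2 * π ^ 2 / c)) ^ n.natAbs := by
  rw [← Real.exp_nat_mul, ← Real.exp_add]
  apply Real.exp_le_exp.mpr
  have hπ := Real.pi_pos
  have hna := natAbs_le_sq n
  have key : -(x + 2 * π * n) ^ 2 ≤ x ^ 2 - 2 * π ^ 2 * (n.natAbs : ℝ) := by
    nlinarith [sq_nonneg (2 * x + 2 * π * n), natAbs_sq_cast n, sq_nonneg (x + 2 * π * n)]
  calc -(x + 2 * π * n) ^ 2 / c ≤ (x ^ 2 - 2 * π ^ 2 * (n.natAbs : ℝ)) / c := by gcongr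
    _ = x ^ 2 / c + (n.natAbs : ℝ) * (-(2 * π ^ 2 / c)) := by ring

lemma summable_gauss (c x : ℝ) (hc : 0 < c) :
    Summable fun n : ℤ => rexp (-(x + 2 * π * n) ^ 2 / c) := by
  have hr0 : (0:ℝ) ≤ rexp (-(2 * π ^ 2 / c)) := (Real.exp_pos _).le
  have hr1 : rexp (-(2 * π ^ 2 / c)) < 1 := by
    rw [Real.exp_lt_one_iff]
    have hp := Real.pi_pos
    have h2 : 0 < 2 * π ^ 2 / c := by positivity
    linarith
  exact Summable.of_nonneg_of_le (fun n => (Real.exp_pos _).le) (gauss_term_le c x hc)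
    ((int_geom_summable hr0 hr1).mul_left _)

/-- The theta-function bound: for `0 < α ≤ 1` the periodized Gaussian sum is at most 10. -/
lemma theta_le (α x : ℝ) (h0 : 0 < α) (h1 : α ≤ 1) :
    ∑' n : ℤ, rexp (-(x + 2 * π * n) ^ 2 / (32 * α)) ≤ 10 := by
  have hπ := Real.pi_gt_three
  have hπ0 := Real.pi_pos
  set n₀ : ℤ := round (x / (2 * π)) with hn₀
  set x₀ : ℝ := x - 2 * π * n₀ with hx₀
  have hx₀le : |x₀| ≤ π := by
    have h := abs_sub_round (x / (2 * π))
    have h2π : (0:ℝ) < 2 * π := by linarith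
    rw [hx₀, hn₀]
    have : x - 2 * π * round (x / (2 * π)) = (x / (2 * π) - round (x / (2 * π))) * (2 * π) := by
      field_simp
    rw [this, abs_mul, abs_of_pos h2π]
    calc |x / (2 * π) - ↑(round (x / (2 * π)))| * (2 * π) ≤ (1/2) * (2 * π) := by
          apply mul_le_mul_of_nonneg_right h h2π.le
      _ = π := by ring
  -- reindex
  have hre : ∑' n : ℤ, rexp (-(x + 2 * π * n) ^ 2 / (32 * α))
      = ∑' n : ℤ, rexp (-(x₀ + 2 * π * n) ^ 2 / (32 * α)) := by
    rw [← (Equiv.subRight n₀).tsum_eq (fun n : ℤ => rexp (-(x + 2 * π * n) ^ 2 / (32 * α)))]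
    apply tsum_congr
    intro n
    simp only [Equiv.subRight_apply]
    congr 2
    push_cast
    ring
  rw [hre]
  set r : ℝ := rexp (-(1/4)) with hr
  have hr0 : 0 ≤ r := (Real.exp_pos _).le
  have hr45 : r ≤ 4/5 := by
    rw [hr, Real.exp_neg]
    have h54 : (5/4 : ℝ) ≤ rexp (1/4) := by
      have := Real.add_one_le_exp (1/4 : ℝ)
      linarith
    rw [inv_le_comm₀ (by positivity) (by norm_num)]
    linarith
  have hr1 : r < 1 := by linarith
  have hterm : ∀ n : ℤ, rexp (-(x₀ + 2 * π * n) ^ 2 / (32 * α)) ≤ r ^ n.natAbs := by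
    intro n
    rcases eq_or_ne n 0 with hn | hn
    · subst hn
      simp only [Int.natAbs_zero, pow_zero, Int.cast_zero]
      rw [← Real.exp_zero]
      apply Real.exp_le_exp.mpr
      have : (0:ℝ) ≤ (x₀ + 2 * π * 0) ^ 2 := sq_nonneg _
      have h32 : (0:ℝ) < 32 * α := by linarith
      simp only [mul_zero, add_zero]
      apply div_nonpos_of_nonpos_of_nonneg (by nlinarith [sq_nonneg x₀]) h32.le
    · have hna : 1 ≤ (n.natAbs : ℝ) := by
        have : 1 ≤ n.natAbs := Int.one_le_abs (by exact_mod_cast hn) |> fun h => by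
          omega
        exact_mod_cast this
      have hcast : |(n:ℝ)| = (n.natAbs : ℝ) := by
        rw [Nat.cast_natAbs]
        push_cast
        rfl
      have habs : π * (n.natAbs : ℝ) ≤ |x₀ + 2 * π * n| := by
        have h1 : |(2 * π * n : ℝ)| - |x₀| ≤ |x₀ + 2 * π * n| := by
          have := abs_add_le x₀ (2 * π * n)
          have h2 := abs_sub_abs_le_abs_sub (2 * π * (n:ℝ)) (-x₀)
          calc |(2 * π * n : ℝ)| - |x₀| = |(2 * π * n : ℝ)| - |-x₀| := by rw [abs_neg]
            _ ≤ |2 * π * n - -x₀| := h2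
            _ = |x₀ + 2 * π * n| := by congr 1; ring
        have h3 : |(2 * π * n : ℝ)| = 2 * π * (n.natAbs : ℝ) := by
          rw [abs_mul, ← hcast, abs_of_pos (by linarith : (0:ℝ) < 2 * π)]
        nlinarith
      have hsq : 8 * (n.natAbs : ℝ) ≤ (x₀ + 2 * π * n) ^ 2 := by
        have h4 : (π * (n.natAbs : ℝ))^2 ≤ (x₀ + 2 * π * n) ^ 2 := by
          rw [← sq_abs (x₀ + 2 * π * n)]
          exact pow_le_pow_left₀ (by positivity) habs 2
        have h5 : (n.natAbs : ℝ) ≤ ((n.natAbs : ℝ))^2 := by nlinarith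
        have h6 : (9:ℝ) ≤ π^2 := by nlinarith
        nlinarith [sq_nonneg ((n.natAbs : ℝ))]
      have hstep : rexp (-(x₀ + 2 * π * n) ^ 2 / (32 * α)) ≤ rexp (-(n.natAbs : ℝ) / 4) := by
        apply Real.exp_le_exp.mpr
        rw [div_le_div_iff₀ (by positivity) (by norm_num : (0:ℝ) < 4)]
        nlinarith [sq_nonneg (x₀ + 2 * π * n)]
      refine hstep.trans ?_
      rw [hr, ← Real.exp_nat_mul]
      apply Real.exp_le_exp.mpr
      ring_nf
      nlinarith
  calc ∑' n : ℤ, rexp (-(x₀ + 2 * π * n) ^ 2 / (32 * α))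
      ≤ ∑' n : ℤ, r ^ n.natAbs := by
        apply Summable.tsum_le_tsum hterm (summable_gauss _ _ (by positivity)) (int_geom_summable hr0 hr1)
    _ ≤ 2 * (1 - r)⁻¹ := int_geom_tsum_le hr0 hr1
    _ ≤ 10 := by
        have h15 : (1/5 : ℝ) ≤ 1 - r := by linarith
        have := inv_anti₀ (by norm_num : (0:ℝ) < 1/5) h15
        norm_num at this
        linarith


lemma circleDist_set_nonempty (x : ℝ) : {y : ℝ | ∃ n : ℤ, y = |x - 2 * π * n|}.Nonempty :=
  ⟨|x - 2 * π * (0:ℤ)|, ⟨0, rfl⟩⟩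

lemma circleDist_set_bdd (x : ℝ) : BddBelow {y : ℝ | ∃ n : ℤ, y = |x - 2 * π * n|} :=
  ⟨0, fun y hy => by obtain ⟨n, rfl⟩ := hy; exact abs_nonneg _⟩

lemma circleDist_nonneg (x : ℝ) : 0 ≤ circleDist x :=
  le_csInf (circleDist_set_nonempty x)
    (fun y hy => by obtain ⟨n, rfl⟩ := hy; exact abs_nonneg _)

lemma circleDist_le (x : ℝ) (n : ℤ) : circleDist x ≤ |x - 2 * π * n| :=
  csInf_le (circleDist_set_bdd x) ⟨n, rfl⟩

lemma circleDist_sq_le (x : ℝ) (n : ℤ) : circleDist x ^ 2 ≤ (x + 2 * π * n) ^ 2 := by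
  have h := circleDist_le x (-n)
  have h2 : |x - 2 * π * (-n : ℤ)| = |x + 2 * π * n| := by push_cast; ring_nf
  rw [h2] at h
  calc circleDist x ^ 2 ≤ |x + 2 * π * n| ^ 2 :=
        pow_le_pow_left₀ (circleDist_nonneg x) h 2
    _ = (x + 2 * π * n) ^ 2 := sq_abs _

lemma circleDist_sub_le (x y : ℝ) : circleDist x ≤ circleDist y + |x - y| := by
  have key : ∀ n : ℤ, circleDist x - |x - y| ≤ |y - 2 * π * n| := by
    intro n
    have h1 := circleDist_le x n
    have h2 : |x - 2 * π * n| ≤ |y - 2 * π * n| + |x - y| := by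
      calc |x - 2 * π * n| = |(y - 2 * π * n) + (x - y)| := by ring_nf
        _ ≤ |y - 2 * π * n| + |x - y| := abs_add_le _ _
    linarith
  have h3 : circleDist x - |x - y| ≤ circleDist y := by
    unfold circleDist
    exact le_csInf (circleDist_set_nonempty y)
      (fun z hz => by obtain ⟨n, rfl⟩ := hz; exact key n)
  linarith

lemma circleDist_continuous : Continuous circleDist := by
  apply Metric.continuous_iff.mpr
  intro x ε hε
  refine ⟨ε, hε, fun y hy => ?_⟩
  rw [Real.dist_eq]
  rw [Real.dist_eq] at hy
  have h1 := circleDist_sub_le x y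
  have h2 := circleDist_sub_le y x
  rw [abs_sub_comm] at h2
  have hxy : |x - y| < ε := by rwa [abs_sub_comm]
  rw [abs_lt]
  constructor <;> linarith


lemma sum_gauss_le (α x c : ℝ) (h0 : 0 < α) (h1 : α ≤ 1) (hc0 : 0 < c) (hc : c ≤ 16 * α) :
    ∑' n : ℤ, rexp (-(x + 2 * π * n) ^ 2 / c)
      ≤ 10 * rexp (-circleDist x ^ 2 / (32 * α)) := by
  have hterm : ∀ n : ℤ, rexp (-(x + 2 * π * n) ^ 2 / c)
      ≤ rexp (-circleDist x ^ 2 / (32 * α)) * rexp (-(x + 2 * π * n) ^ 2 / (32 * α)) := by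
    intro n
    rw [← Real.exp_add]
    apply Real.exp_le_exp.mpr
    have hy := circleDist_sq_le x n
    have hy0 := sq_nonneg (x + 2 * π * n)
    have hr0 := sq_nonneg (circleDist x)
    rw [div_add_div _ _ (by positivity) (by positivity), div_le_div_iff₀ (by positivity) (by positivity)]
    ring_nf
    nlinarith [mul_le_mul_of_nonneg_left hc hy0, mul_le_mul_of_nonneg_left hy (le_of_lt hc0)]
  calc ∑' n : ℤ, rexp (-(x + 2 * π * n) ^ 2 / c)
      ≤ ∑' n : ℤ, rexp (-circleDist x ^ 2 / (32 * α)) * rexp (-(x + 2 * π * n) ^ 2 / (32 * α)) :=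
        Summable.tsum_le_tsum hterm (summable_gauss c x hc0)
          ((summable_gauss (32 * α) x (by positivity)).mul_left _)
    _ = rexp (-circleDist x ^ 2 / (32 * α)) * ∑' n : ℤ, rexp (-(x + 2 * π * n) ^ 2 / (32 * α)) :=
        tsum_mul_left
    _ ≤ rexp (-circleDist x ^ 2 / (32 * α)) * 10 := by
        apply mul_le_mul_of_nonneg_left (theta_le α x h0 h1) (Real.exp_pos _).le
    _ = 10 * rexp (-circleDist x ^ 2 / (32 * α)) := by ring

lemma heatK_nonneg (α x : ℝ) : 0 ≤ heatK α x :=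
  tsum_nonneg fun n => by positivity

lemma sqrt4πα (α : ℝ) (h0 : 0 < α) : 1 / Real.sqrt (4 * π * α) ≤ (Real.sqrt α)⁻¹ := by
  have hπ := Real.pi_gt_three
  rw [one_div]
  apply inv_anti₀ (Real.sqrt_pos.mpr h0)
  apply Real.sqrt_le_sqrt
  nlinarith

lemma heatK_le (α x : ℝ) (h0 : 0 < α) (h1 : α ≤ 1) :
    heatK α x ≤ 10 * (Real.sqrt α)⁻¹ * rexp (-circleDist x ^ 2 / (32 * α)) := by
  rw [heatK, tsum_mul_left]
  have hs := sum_gauss_le α x (4 * α) h0 h1 (by positivity) (by nlinarith)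
  have hsum0 : 0 ≤ ∑' n : ℤ, rexp (-(x + 2 * π * n) ^ 2 / (4 * α)) :=
    tsum_nonneg fun n => (Real.exp_pos _).le
  calc (1 / Real.sqrt (4 * π * α)) * ∑' n : ℤ, rexp (-(x + 2 * π * n) ^ 2 / (4 * α))
      ≤ (Real.sqrt α)⁻¹ * (10 * rexp (-circleDist x ^ 2 / (32 * α))) := by
        apply mul_le_mul (sqrt4πα α h0) hs hsum0 (by positivity)
    _ = 10 * (Real.sqrt α)⁻¹ * rexp (-circleDist x ^ 2 / (32 * α)) := by ring

lemma abs_sub_le_of_mem_uIcc {x h u : ℝ} (hu : u ∈ Set.uIcc x (x + h)) : |u - x| ≤ |h| := by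
  rcases Set.mem_uIcc.mp hu with ⟨h1, h2⟩ | ⟨h1, h2⟩ <;>
    (rw [abs_le]; constructor <;> nlinarith [le_abs_self h, neg_abs_le h, abs_nonneg h])

lemma mul_exp_le (α s : ℝ) (h0 : 0 < α) (hs : 0 ≤ s) :
    s * rexp (-(s ^ 2 / (8 * α))) ≤ 2 * Real.sqrt α := by
  have hsq : Real.sqrt α ^ 2 = α := Real.sq_sqrt h0.le
  have hsqp : 0 < Real.sqrt α := Real.sqrt_pos.mpr h0
  have hXpos : (0:ℝ) < 1 + s ^ 2 / (8 * α) := by positivity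
  have he : 1 + s ^ 2 / (8 * α) ≤ rexp (s ^ 2 / (8 * α)) := by
    have := Real.add_one_le_exp (s ^ 2 / (8 * α)); linarith
  have h2 : (rexp (s ^ 2 / (8 * α)))⁻¹ ≤ (1 + s ^ 2 / (8 * α))⁻¹ := by
    apply inv_anti₀ hXpos he
  rw [Real.exp_neg]
  calc s * (rexp (s ^ 2 / (8 * α)))⁻¹ ≤ s * (1 + s ^ 2 / (8 * α))⁻¹ :=
        mul_le_mul_of_nonneg_left h2 hs
    _ = s / (1 + s ^ 2 / (8 * α)) := (div_eq_mul_inv _ _).symm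
    _ ≤ 2 * Real.sqrt α := by
        rw [div_le_iff₀ hXpos]
        have hkey : 0 ≤ 2 * Real.sqrt α * (s - 2 * Real.sqrt α) ^ 2 := by positivity
        have h8 : (0:ℝ) < 8 * α := by positivity
        have ht : s ^ 2 / (8 * α) * (8 * α) = s ^ 2 := div_mul_cancel₀ _ (ne_of_gt h8)
        nlinarith [hkey, hsq, hsqp.le, ht, h8]

lemma heatK_sub_le (α x h : ℝ) (h0 : 0 < α) (h1 : α ≤ 1) :
    |heatK α (x + h) - heatK α x|
      ≤ 10 * |h| * α⁻¹ * rexp (h ^ 2 / (8 * α)) * rexp (-circleDist x ^ 2 / (32 * α)) := by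
  have hπ := Real.pi_gt_three
  set c₀ : ℝ := 1 / Real.sqrt (4 * π * α) with hc₀
  have hc₀0 : 0 ≤ c₀ := by positivity
  -- the single-term functions and their derivatives
  set g : ℤ → ℝ → ℝ := fun n u => c₀ * rexp (-(u + 2 * π * n) ^ 2 / (4 * α)) with hg
  set g' : ℤ → ℝ → ℝ := fun n u =>
    c₀ * (rexp (-(u + 2 * π * n) ^ 2 / (4 * α)) * (-(2 * (u + 2 * π * n)) / (4 * α))) with hg'
  have hder : ∀ n u, HasDerivAt (g n) (g' n u) u := by
    intro n u
    have h1' : HasDerivAt (fun v : ℝ => v + 2 * π * n) 1 u := (hasDerivAt_id u).add_const _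
    have h2' := h1'.pow 2
    have h3' := (h2'.neg).div_const (4 * α)
    have h4' := h3'.exp
    have h5' := h4'.const_mul c₀
    refine h5'.congr_deriv ?_
    simp only [Pi.neg_apply, Pi.pow_apply]
    rw [hg']
    ring_nf
  -- per-term bound for the derivative on the segment
  have hbound : ∀ n : ℤ, ∀ u ∈ Set.uIcc x (x + h),
      ‖g' n u‖ ≤ α⁻¹ * rexp (h ^ 2 / (8 * α)) * rexp (-(x + 2 * π * n) ^ 2 / (16 * α)) := by
    intro n u hu
    have hux : |u - x| ≤ |h| := abs_sub_le_of_mem_uIcc hu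
    set y : ℝ := u + 2 * π * n with hy
    clear_value y
    have hsplit : rexp (-y ^ 2 / (4 * α)) = rexp (-(y ^ 2 / (8 * α))) * rexp (-y ^ 2 / (8 * α)) := by
      rw [← Real.exp_add]; congr 1; ring
    have hstep2 : |y| * rexp (-(y ^ 2 / (8 * α))) ≤ 2 * Real.sqrt α := by
      have := mul_exp_le α |y| h0 (abs_nonneg y)
      rwa [sq_abs] at this
    have hstep3 : rexp (-y ^ 2 / (8 * α))
        ≤ rexp (h ^ 2 / (8 * α)) * rexp (-(x + 2 * π * n) ^ 2 / (16 * α)) := by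
      rw [← Real.exp_add]
      apply Real.exp_le_exp.mpr
      have hyx : y = (x + 2 * π * n) + (u - x) := by rw [hy]; ring
      have huxsq : (u - x) ^ 2 ≤ h ^ 2 := by
        have := sq_abs (u - x); have := sq_abs h
        nlinarith [abs_nonneg (u - x), abs_nonneg h]
      have hysq : (x + 2 * π * n) ^ 2 / 2 - h ^ 2 ≤ y ^ 2 := by
        rw [hyx]
        nlinarith [sq_nonneg ((x + 2 * π * (n:ℝ)) + 2 * (u - x)), huxsq]
      rw [div_add_div _ _ (by positivity : (8:ℝ) * α ≠ 0) (by positivity : (16:ℝ) * α ≠ 0)]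
      rw [div_le_div_iff₀ (by positivity) (by positivity)]
      nlinarith [mul_le_mul_of_nonneg_left hysq (show (0:ℝ) ≤ 128 * α * α by positivity)]
    have hnorm : ‖g' n u‖ = c₀ * (rexp (-y ^ 2 / (4 * α)) * (|y| / (2 * α))) := by
      simp only [hg']
      rw [← hy]
      rw [Real.norm_eq_abs, abs_mul, abs_of_nonneg hc₀0, abs_mul,
        abs_of_nonneg (Real.exp_pos _).le]
      congr 1
      rw [abs_div, abs_of_pos (by positivity : (0:ℝ) < 4 * α), abs_neg, abs_mul,
        abs_of_nonneg (by norm_num : (0:ℝ) ≤ 2)]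
      ring
    rw [hnorm, hsplit]
    have hc₀2 : c₀ ≤ (Real.sqrt α)⁻¹ := sqrt4πα α h0
    have hsqp : 0 < Real.sqrt α := Real.sqrt_pos.mpr h0
    have hsq : Real.sqrt α ^ 2 = α := Real.sq_sqrt h0.le
    have m3 : (|y| * rexp (-(y ^ 2 / (8 * α)))) * rexp (-y ^ 2 / (8 * α))
        ≤ (2 * Real.sqrt α) * (rexp (h ^ 2 / (8 * α)) * rexp (-(x + 2 * π * n) ^ 2 / (16 * α))) :=
      mul_le_mul hstep2 hstep3 (Real.exp_pos _).le (by positivity)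
    have m5 : c₀ * ((|y| * rexp (-(y ^ 2 / (8 * α)))) * rexp (-y ^ 2 / (8 * α)))
        ≤ (Real.sqrt α)⁻¹ * ((2 * Real.sqrt α) * (rexp (h ^ 2 / (8 * α)) *
            rexp (-(x + 2 * π * n) ^ 2 / (16 * α)))) :=
      mul_le_mul hc₀2 m3 (by positivity) (by positivity)
    have hkey2 : (Real.sqrt α)⁻¹ * (2 * Real.sqrt α) = 2 := by
      field_simp
    calc c₀ * (rexp (-(y ^ 2 / (8 * α))) * rexp (-y ^ 2 / (8 * α)) * (|y| / (2 * α)))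
        = c₀ * ((|y| * rexp (-(y ^ 2 / (8 * α)))) * rexp (-y ^ 2 / (8 * α))) / (2 * α) := by
          ring
      _ ≤ ((Real.sqrt α)⁻¹ * ((2 * Real.sqrt α) * (rexp (h ^ 2 / (8 * α)) *
            rexp (-(x + 2 * π * n) ^ 2 / (16 * α))))) / (2 * α) :=
          div_le_div_of_nonneg_right m5 (by positivity)
      _ = α⁻¹ * rexp (h ^ 2 / (8 * α)) * rexp (-(x + 2 * π * n) ^ 2 / (16 * α)) := by
          rw [show (Real.sqrt α)⁻¹ * ((2 * Real.sqrt α) * (rexp (h ^ 2 / (8 * α)) *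
            rexp (-(x + 2 * π * n) ^ 2 / (16 * α)))) = ((Real.sqrt α)⁻¹ * (2 * Real.sqrt α)) *
            (rexp (h ^ 2 / (8 * α)) * rexp (-(x + 2 * π * n) ^ 2 / (16 * α))) from by ring, hkey2]
          field_simp
  -- now sum over n
  have hsg : ∀ v : ℝ, Summable (fun n : ℤ => g n v) := fun v =>
    (summable_gauss (4 * α) v (by positivity)).mul_left c₀
  have hKv : ∀ v : ℝ, heatK α v = ∑' n : ℤ, g n v := by
    intro v
    simp only [heatK, hg, hc₀]
  set B : ℤ → ℝ := fun n =>
    α⁻¹ * rexp (h ^ 2 / (8 * α)) * rexp (-(x + 2 * π * n) ^ 2 / (16 * α)) * |h| with hB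
  have hsumB : Summable B :=
    ((summable_gauss (16 * α) x (by positivity)).mul_left
      (α⁻¹ * rexp (h ^ 2 / (8 * α)))).mul_right |h|
  have hterm : ∀ n : ℤ, ‖g n (x + h) - g n x‖ ≤ B n := by
    intro n
    have hmvt := Convex.norm_image_sub_le_of_norm_hasDerivWithin_le
      (f := g n) (f' := g' n) (s := Set.uIcc x (x + h))
      (fun u _ => (hder n u).hasDerivWithinAt) (hbound n) (convex_uIcc _ _)
      Set.left_mem_uIcc Set.right_mem_uIcc
    have hxx : x + h - x = h := by ring
    rw [hxx, Real.norm_eq_abs] at hmvt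
    exact hmvt
  have hsumnorm : Summable fun n : ℤ => ‖g n (x + h) - g n x‖ :=
    Summable.of_nonneg_of_le (fun n => norm_nonneg _) hterm hsumB
  have hdiff : heatK α (x + h) - heatK α x = ∑' n : ℤ, (g n (x + h) - g n x) := by
    rw [hKv, hKv]
    exact (Summable.tsum_sub (hsg (x + h)) (hsg x)).symm
  calc |heatK α (x + h) - heatK α x| = ‖∑' n : ℤ, (g n (x + h) - g n x)‖ := by
        rw [hdiff, Real.norm_eq_abs]
    _ ≤ ∑' n : ℤ, ‖g n (x + h) - g n x‖ := norm_tsum_le_tsum_norm hsumnorm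
    _ ≤ ∑' n : ℤ, B n := Summable.tsum_le_tsum hterm hsumnorm hsumB
    _ = α⁻¹ * rexp (h ^ 2 / (8 * α)) *
          (∑' n : ℤ, rexp (-(x + 2 * π * n) ^ 2 / (16 * α))) * |h| := by
        rw [hB, tsum_mul_right, tsum_mul_left]
    _ ≤ α⁻¹ * rexp (h ^ 2 / (8 * α)) * (10 * rexp (-circleDist x ^ 2 / (32 * α))) * |h| := by
        have hS := sum_gauss_le α x (16 * α) h0 h1 (by positivity) le_rfl
        gcongr
    _ = 10 * |h| * α⁻¹ * rexp (h ^ 2 / (8 * α)) * rexp (-circleDist x ^ 2 / (32 * α)) := by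
        ring

lemma gauss_term_bound (α A B L x : ℝ) (n : ℤ) (hA : 0 < A) (h1 : A ≤ α) (h2 : α ≤ B)
    (hx : |x| ≤ L) :
    (1 / Real.sqrt (4 * π * α)) * rexp (-(x + 2 * π * n) ^ 2 / (4 * α))
      ≤ (1 / Real.sqrt (4 * π * A)) *
        (rexp (L ^ 2 / (4 * A)) * rexp (-(0 + 2 * π * n) ^ 2 / (8 * B))) := by
  have hπ := Real.pi_gt_three
  have hα : 0 < α := lt_of_lt_of_le hA h1
  have hB : 0 < B := lt_of_lt_of_le hα h2
  have hf1 : (1 : ℝ) / Real.sqrt (4 * π * α) ≤ 1 / Real.sqrt (4 * π * A) := by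
    gcongr
  have hL : 0 ≤ L := le_trans (abs_nonneg x) hx
  have hx2 : x ^ 2 ≤ L ^ 2 := by
    have := abs_le.mp hx
    nlinarith
  have e1 : (0 + 2 * π * (n:ℝ)) ^ 2 / (8 * B) ≤ (x + 2 * π * n) ^ 2 / (4 * α) + L ^ 2 / (4 * A) := by
    have k1 : (0 + 2 * π * (n:ℝ)) ^ 2 / (8 * B) ≤ (0 + 2 * π * (n:ℝ)) ^ 2 / (8 * α) := by
      gcongr
    have k3 : (0 + 2 * π * (n:ℝ)) ^ 2 / (8 * α)
        ≤ (x + 2 * π * n) ^ 2 / (4 * α) + x ^ 2 / (4 * α) := by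
      have k2 : (0 + 2 * π * (n:ℝ)) ^ 2 ≤ 2 * (x + 2 * π * n) ^ 2 + 2 * x ^ 2 := by
        nlinarith [sq_nonneg (2 * x + 2 * π * (n:ℝ))]
      calc (0 + 2 * π * (n:ℝ)) ^ 2 / (8 * α)
          ≤ (2 * (x + 2 * π * n) ^ 2 + 2 * x ^ 2) / (8 * α) := by gcongr
        _ = (x + 2 * π * n) ^ 2 / (4 * α) + x ^ 2 / (4 * α) := by ring
    have k4 : x ^ 2 / (4 * α) ≤ L ^ 2 / (4 * A) := by gcongr
    linarith
  have hexp : rexp (-(x + 2 * π * n) ^ 2 / (4 * α))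
      ≤ rexp (L ^ 2 / (4 * A)) * rexp (-(0 + 2 * π * n) ^ 2 / (8 * B)) := by
    rw [← Real.exp_add]
    apply Real.exp_le_exp.mpr
    rw [neg_div, neg_div]
    linarith [e1]
  calc (1 / Real.sqrt (4 * π * α)) * rexp (-(x + 2 * π * n) ^ 2 / (4 * α))
      ≤ (1 / Real.sqrt (4 * π * A)) *
        (rexp (L ^ 2 / (4 * A)) * rexp (-(0 + 2 * π * n) ^ 2 / (8 * B))) :=
      mul_le_mul hf1 hexp (Real.exp_pos _).le (by positivity)

lemma heatK_contOn (A B L : ℝ) (hA : 0 < A) (hL : 0 ≤ L) :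
    ContinuousOn (fun p : ℝ × ℝ => heatK p.1 p.2) (Set.Icc A B ×ˢ Set.Icc (-L) L) := by
  have hπ := Real.pi_gt_three
  rcases le_or_gt A B with hAB | hAB
  swap
  · -- empty set
    intro p hp
    rw [Set.mem_prod] at hp
    exact absurd (le_trans hp.1.1 hp.1.2) (not_le.mpr hAB)
  have hB : 0 < B := lt_of_lt_of_le hA hAB
  have : ∀ p : ℝ × ℝ, heatK p.1 p.2
      = ∑' n : ℤ, (1 / Real.sqrt (4 * π * p.1)) * rexp (-(p.2 + 2 * π * n) ^ 2 / (4 * p.1)) :=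
    fun p => rfl
  simp only [this]
  apply continuousOn_tsum
    (u := fun n : ℤ => (1 / Real.sqrt (4 * π * A)) *
      (rexp (L ^ 2 / (4 * A)) * rexp (-(0 + 2 * π * n) ^ 2 / (8 * B))))
  · intro n
    apply ContinuousOn.mul
    · apply ContinuousOn.div continuousOn_const
      · exact (Real.continuous_sqrt.comp (by fun_prop)).continuousOn
      · intro p hp
        rw [Set.mem_prod] at hp
        have h1 : A ≤ p.1 := hp.1.1
        exact ne_of_gt (Real.sqrt_pos.mpr (by nlinarith))
    · apply Real.continuous_exp.comp_continuousOn
      apply ContinuousOn.div (by fun_prop) (by fun_prop)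
      intro p hp
      rw [Set.mem_prod] at hp
      have h1 : A ≤ p.1 := hp.1.1
      nlinarith
  · exact (((summable_gauss (8 * B) 0 (by positivity)).mul_left _).mul_left _)
  · intro n p hp
    rw [Set.mem_prod] at hp
    rw [Real.norm_eq_abs, abs_of_nonneg (by positivity)]
    exact gauss_term_bound p.1 A B L p.2 n hA hp.1.1 hp.1.2 (abs_le.mpr ⟨hp.2.1, hp.2.2⟩)

lemma heatK_contOn_univ (A B : ℝ) (hA : 0 < A) :
    ContinuousOn (fun p : ℝ × ℝ => heatK p.1 p.2) (Set.Icc A B ×ˢ (Set.univ : Set ℝ)) := by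
  intro p hp
  rw [Set.mem_prod] at hp
  set L : ℝ := |p.2| + 1 with hLd
  have h1 := heatK_contOn A B L hA (by positivity)
  have hpmem : p ∈ Set.Icc A B ×ˢ Set.Icc (-L) L := by
    rw [Set.mem_prod]
    refine ⟨hp.1, ⟨?_, ?_⟩⟩
    · have := neg_abs_le p.2; rw [hLd]; linarith
    · have := le_abs_self p.2; rw [hLd]; linarith
  have hmem : Set.Icc A B ×ˢ Set.Icc (-L) L ∈ 𝓝[Set.Icc A B ×ˢ (Set.univ : Set ℝ)] p := by
    apply mem_nhdsWithin.mpr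
    refine ⟨Set.univ ×ˢ Set.Ioo (-L) L, isOpen_univ.prod isOpen_Ioo, ?_, ?_⟩
    · rw [Set.mem_prod]
      refine ⟨trivial, ⟨?_, ?_⟩⟩
      · have := neg_abs_le p.2; rw [hLd]; linarith
      · have := le_abs_self p.2; rw [hLd]; linarith
    · rintro q ⟨hq1, hq2⟩
      rw [Set.mem_prod] at *
      exact ⟨hq2.1, Set.Ioo_subset_Icc_self hq1.2⟩
  exact (h1.continuousWithinAt hpmem).mono_of_mem_nhdsWithin hmem

lemma prodHeat_cont_lam (α : ℝ) (hα : 0 < α) {d : ℕ} (c : Fin d → ℝ) :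
    Continuous fun lam => ∏ k : Fin d, heatK α (c k + lam) := by
  apply continuous_finset_prod
  intro k _
  have hg : Continuous fun lam : ℝ => ((α, c k + lam) : ℝ × ℝ) := by fun_prop
  have h2 := (heatK_contOn_univ α α hα).comp_continuous hg
    (fun lam => by rw [Set.mem_prod]; exact ⟨⟨le_rfl, le_rfl⟩, trivial⟩)
  exact h2

lemma prodHeat_contOn_param (A B : ℝ) (hA : 0 < A) (hAB : A ≤ B) {d : ℕ} (c : Fin d → ℝ) :
    ContinuousOn (fun α => ∫ lam in (0:ℝ)..(2 * π), ∏ k : Fin d, heatK α (c k + lam))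
      (Set.Icc A B) := by
  set clamp : ℝ → ℝ := fun a => max A (min B a) with hclamp
  have hclampmem : ∀ a, clamp a ∈ Set.Icc A B := fun a =>
    ⟨le_max_left _ _, max_le hAB (min_le_left _ _)⟩
  have hconts : Continuous (Function.uncurry
      (fun (a lam : ℝ) => ∏ k : Fin d, heatK (clamp a) (c k + lam))) := by
    apply continuous_finset_prod
    intro k _
    have hg : Continuous fun p : ℝ × ℝ => ((clamp p.1, c k + p.2) : ℝ × ℝ) := by fun_prop
    have h2 := (heatK_contOn_univ A B hA).comp_continuous hg
      (fun p => by rw [Set.mem_prod]; exact ⟨hclampmem _, trivial⟩)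
    exact h2
  have hFcont := intervalIntegral.continuous_parametric_intervalIntegral_of_continuous' (μ := volume) hconts 0 (2 * π)
  apply ContinuousOn.congr hFcont.continuousOn
  intro a ha
  have hca : clamp a = a := by
    rw [hclamp]
    simp only []
    rw [min_eq_right ha.2, max_eq_right ha.1]
  simp only [hca]

lemma prod_diff_bound (d : ℕ) (hd : 1 ≤ d) (ℓ : Fin d) (θ θ' : Fin d → ℝ) (M N α h lam : ℝ)
    (hM : 1 < M) (hN1 : 1 ≤ N) (hα0 : 0 < α) (hα1 : α ≤ 1)
    (hαA : (N ^ 2)⁻¹ ≤ α) (hαB : α ≤ M ^ 2 * (N ^ 2)⁻¹) :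
    |(∏ k : Fin d, heatK α (Function.update θ ℓ (θ ℓ + h) k - θ' k + lam))
        - ∏ k : Fin d, heatK α (θ k - θ' k + lam)|
      ≤ 10 ^ d * N ^ 2 * N ^ (d - 1) * rexp (h ^ 2 * N ^ 2 / 8) * rexp (8 * d * M ^ 2) * |h|
          * rexp (-1 * N * ∑ k : Fin d, circleDist (θ k - θ' k + lam)) := by
  have hM0 : (0:ℝ) < M := lt_trans one_pos hM
  have hN0 : (0:ℝ) < N := lt_of_lt_of_le one_pos hN1
  set x : Fin d → ℝ := fun k => θ k - θ' k + lam with hxd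
  -- factor the products
  have h1 : (∏ k : Fin d, heatK α (Function.update θ ℓ (θ ℓ + h) k - θ' k + lam))
      = heatK α (x ℓ + h) * ∏ k ∈ Finset.univ.erase ℓ, heatK α (x k) := by
    rw [← Finset.mul_prod_erase Finset.univ _ (Finset.mem_univ ℓ)]
    congr 1
    · rw [Function.update_self]
      congr 1
      rw [hxd]
      ring
    · apply Finset.prod_congr rfl
      intro k hk
      rw [Function.update_of_ne (Finset.ne_of_mem_erase hk)]
  have h2 : (∏ k : Fin d, heatK α (θ k - θ' k + lam))
      = heatK α (x ℓ) * ∏ k ∈ Finset.univ.erase ℓ, heatK α (x k) :=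
    (Finset.mul_prod_erase Finset.univ _ (Finset.mem_univ ℓ)).symm
  rw [h1, h2, ← sub_mul, abs_mul]
  have hQ0 : 0 ≤ ∏ k ∈ Finset.univ.erase ℓ, heatK α (x k) :=
    Finset.prod_nonneg fun k _ => heatK_nonneg _ _
  rw [abs_of_nonneg hQ0]
  -- bounds for the two factors
  have hΔ := heatK_sub_le α (x ℓ) h hα0 hα1
  have hcard : (Finset.univ.erase ℓ).card = d - 1 := by
    rw [Finset.card_erase_of_mem (Finset.mem_univ ℓ), Finset.card_univ, Fintype.card_fin]
  have hQle : (∏ k ∈ Finset.univ.erase ℓ, heatK α (x k))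
      ≤ (10 * (Real.sqrt α)⁻¹) ^ (d - 1) *
        ∏ k ∈ Finset.univ.erase ℓ, rexp (-circleDist (x k) ^ 2 / (32 * α)) := by
    calc (∏ k ∈ Finset.univ.erase ℓ, heatK α (x k))
        ≤ ∏ k ∈ Finset.univ.erase ℓ,
            (10 * (Real.sqrt α)⁻¹ * rexp (-circleDist (x k) ^ 2 / (32 * α))) :=
          Finset.prod_le_prod (fun k _ => heatK_nonneg _ _) (fun k _ => heatK_le α (x k) hα0 hα1)
      _ = (10 * (Real.sqrt α)⁻¹) ^ (d - 1) *
            ∏ k ∈ Finset.univ.erase ℓ, rexp (-circleDist (x k) ^ 2 / (32 * α)) := by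
          rw [Finset.prod_mul_distrib, Finset.prod_const, hcard]
  -- multiply both bounds
  have step1 : |heatK α (x ℓ + h) - heatK α (x ℓ)| * ∏ k ∈ Finset.univ.erase ℓ, heatK α (x k)
      ≤ (10 * |h| * α⁻¹ * rexp (h ^ 2 / (8 * α)) * rexp (-circleDist (x ℓ) ^ 2 / (32 * α))) *
        ((10 * (Real.sqrt α)⁻¹) ^ (d - 1) *
          ∏ k ∈ Finset.univ.erase ℓ, rexp (-circleDist (x k) ^ 2 / (32 * α))) :=
    mul_le_mul hΔ hQle hQ0 (by positivity)
  refine le_trans step1 ?_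
  -- reassemble the exponential product over all k
  have hre : rexp (-circleDist (x ℓ) ^ 2 / (32 * α)) *
      ∏ k ∈ Finset.univ.erase ℓ, rexp (-circleDist (x k) ^ 2 / (32 * α))
      = ∏ k : Fin d, rexp (-circleDist (x k) ^ 2 / (32 * α)) :=
    Finset.mul_prod_erase Finset.univ (fun k => rexp (-circleDist (x k) ^ 2 / (32 * α)))
      (Finset.mem_univ ℓ)
  -- the three A-side replacements
  have hainv : α⁻¹ ≤ N ^ 2 := by
    have := inv_anti₀ (by positivity : (0:ℝ) < (N ^ 2)⁻¹) hαA
    rwa [inv_inv] at this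
  have hsainv : (Real.sqrt α)⁻¹ ≤ N := by
    have h3 : Real.sqrt ((N ^ 2)⁻¹) ≤ Real.sqrt α := Real.sqrt_le_sqrt hαA
    have h4 : Real.sqrt ((N ^ 2)⁻¹) = N⁻¹ := by
      rw [Real.sqrt_inv, Real.sqrt_sq hN0.le]
    rw [h4] at h3
    have := inv_anti₀ (by positivity : (0:ℝ) < N⁻¹) h3
    rwa [inv_inv] at this
  have hexph : rexp (h ^ 2 / (8 * α)) ≤ rexp (h ^ 2 * N ^ 2 / 8) := by
    apply Real.exp_le_exp.mpr
    have e1 : h ^ 2 / (8 * α) ≤ h ^ 2 / (8 * (N ^ 2)⁻¹) := by gcongr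
    have e2 : h ^ 2 / (8 * (N ^ 2)⁻¹) = h ^ 2 * N ^ 2 / 8 := by
      field_simp
    linarith
  -- per-k slice bound
  have hslice : ∀ ρ : ℝ, 0 ≤ ρ → rexp (-ρ ^ 2 / (32 * α)) ≤ rexp (8 * M ^ 2) * rexp (-(N * ρ)) := by
    intro ρ hρ
    rw [← Real.exp_add]
    apply Real.exp_le_exp.mpr
    have hB0 : (0:ℝ) < M ^ 2 * (N ^ 2)⁻¹ := by positivity
    have e3 : ρ ^ 2 / (32 * (M ^ 2 * (N ^ 2)⁻¹)) ≤ ρ ^ 2 / (32 * α) := by gcongr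
    have e4 : ρ ^ 2 / (32 * (M ^ 2 * (N ^ 2)⁻¹)) = ρ ^ 2 * N ^ 2 / (32 * M ^ 2) := by
      field_simp
    have e5 : N * ρ - 8 * M ^ 2 ≤ ρ ^ 2 * N ^ 2 / (32 * M ^ 2) := by
      rw [le_div_iff₀ (by positivity : (0:ℝ) < 32 * M ^ 2)]
      nlinarith [sq_nonneg (N * ρ - 16 * M ^ 2)]
    rw [neg_div]
    linarith
  have hprodexp : (∏ k : Fin d, rexp (-circleDist (x k) ^ 2 / (32 * α)))
      ≤ rexp (8 * d * M ^ 2) * rexp (-1 * N * ∑ k : Fin d, circleDist (x k)) := by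
    calc (∏ k : Fin d, rexp (-circleDist (x k) ^ 2 / (32 * α)))
        ≤ ∏ k : Fin d, (rexp (8 * M ^ 2) * rexp (-(N * circleDist (x k)))) :=
          Finset.prod_le_prod (fun k _ => (Real.exp_pos _).le)
            (fun k _ => hslice _ (circleDist_nonneg _))
      _ = rexp (8 * M ^ 2) ^ d * ∏ k : Fin d, rexp (-(N * circleDist (x k))) := by
          rw [Finset.prod_mul_distrib, Finset.prod_const, Finset.card_univ, Fintype.card_fin]
      _ = rexp (8 * d * M ^ 2) * rexp (-1 * N * ∑ k : Fin d, circleDist (x k)) := by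
          rw [← Real.exp_nat_mul, ← Real.exp_sum]
          congr 1
          · ring
          · rw [Finset.sum_congr rfl (fun k _ => by ring : ∀ k ∈ Finset.univ,
                -(N * circleDist (x k)) = -1 * N * circleDist (x k))]
            rw [← Finset.mul_sum]
  -- final assembly
  have h10 : (10:ℝ) ^ d = 10 * 10 ^ (d - 1) := by
    rw [← pow_succ']
    congr 1
    omega
  calc (10 * |h| * α⁻¹ * rexp (h ^ 2 / (8 * α)) * rexp (-circleDist (x ℓ) ^ 2 / (32 * α))) *
        ((10 * (Real.sqrt α)⁻¹) ^ (d - 1) *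
          ∏ k ∈ Finset.univ.erase ℓ, rexp (-circleDist (x k) ^ 2 / (32 * α)))
      = (10 * |h| * α⁻¹ * rexp (h ^ 2 / (8 * α))) * (10 * (Real.sqrt α)⁻¹) ^ (d - 1) *
          (∏ k : Fin d, rexp (-circleDist (x k) ^ 2 / (32 * α))) := by
        rw [← hre]; ring
    _ ≤ (10 * |h| * (N ^ 2) * rexp (h ^ 2 * N ^ 2 / 8)) * (10 * N) ^ (d - 1) *
          (rexp (8 * d * M ^ 2) * rexp (-1 * N * ∑ k : Fin d, circleDist (x k))) := by
        apply mul_le_mul ?_ hprodexp (Finset.prod_nonneg fun k _ => (Real.exp_pos _).le)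
          (by positivity)
        apply mul_le_mul ?_ (pow_le_pow_left₀ (by positivity) (by gcongr) _) (by positivity)
          (by positivity)
        have hh0 : 0 ≤ |h| := abs_nonneg h
        apply mul_le_mul ?_ hexph (Real.exp_pos _).le (by positivity)
        apply mul_le_mul_of_nonneg_left hainv (by positivity)
    _ = 10 ^ d * N ^ 2 * N ^ (d - 1) * rexp (h ^ 2 * N ^ 2 / 8) * rexp (8 * d * M ^ 2) * |h|
          * rexp (-1 * N * ∑ k : Fin d, circleDist (x k)) := by
        rw [h10, mul_pow]
        ring

lemma abs_deriv_le {f : ℝ → ℝ} {t C : ℝ} (hC : 0 ≤ C)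
    (H : ∀ ε, 0 < ε → ∀ᶠ s in 𝓝 t, |f s - f t| ≤ (C + ε) * |s - t|) :
    |deriv f t| ≤ C := by
  by_cases hd : DifferentiableAt ℝ f t
  · refine le_of_forall_pos_le_add fun ε hε => ?_
    have hslope := hasDerivAt_iff_tendsto_slope.mp hd.hasDerivAt
    have habs : Filter.Tendsto (fun s => |slope f t s|) (𝓝[≠] t) (𝓝 |deriv f t|) := hslope.abs
    refine le_of_tendsto habs ?_
    have hH := (H ε hε).filter_mono (nhdsWithin_le_nhds (s := {t}ᶜ))
    filter_upwards [hH, self_mem_nhdsWithin] with s hs hs'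
    have hst : s ≠ t := hs'
    have habs0 : 0 < |s - t| := abs_pos.mpr (sub_ne_zero.mpr hst)
    rw [slope_def_field, abs_div, div_le_iff₀ habs0]
    exact hs
  · rw [deriv_zero_of_not_differentiableAt hd]
    simpa using hC


/-- **Bound on the derivative of the sliced propagator.** For every `M > 1` there are
constants `K, δ > 0` such that for all `i ≥ 1`, all colors `ℓ`, and all `θ, θ'`,
`|∂C_i/∂θ_ℓ (θ;θ')| ≤ K M^{(d-1)i} ∫ dλ e^{-δ M^i Σ_k |θ_k - θ'_k + λ|}`. -/
theorem sliced_propagator_derivative_bound (d : ℕ) (m : ℝ) (hm : 0 < m) (M : ℝ) (hM : 1 < M) :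
    ∃ K > (0 : ℝ), ∃ δ > (0 : ℝ), ∀ i : ℕ, 1 ≤ i → ∀ ℓ : Fin d, ∀ θ θ' : Fin d → ℝ,
      |deriv (fun t : ℝ => slicedProp d m M i (Function.update θ ℓ t) θ') (θ ℓ)| ≤
        K * M ^ (((d : ℝ) - 1) * (i : ℝ)) *
          ∫ lam in (0 : ℝ)..(2 * π),
            Real.exp (-δ * M ^ (i : ℝ) * ∑ k : Fin d, circleDist (θ k - θ' k + lam)) := by
  have hM0 : (0:ℝ) < M := lt_trans one_pos hM
  refine ⟨10 ^ d * M ^ 2 * rexp (8 * d * M ^ 2), by positivity, 1, one_pos, ?_⟩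
  intro i hi ℓ θ θ'
  have hd : 1 ≤ d := ℓ.pos
  set K : ℝ := 10 ^ d * M ^ 2 * rexp (8 * d * M ^ 2) with hK
  set N : ℝ := M ^ (i : ℝ) with hN
  have hN0 : (0:ℝ) < N := Real.rpow_pos_of_pos hM0 _
  have hN1 : (1:ℝ) ≤ N := by
    rw [hN, show (1:ℝ) = M ^ (0:ℝ) by simp]
    exact Real.rpow_le_rpow_of_exponent_le hM.le (by positivity)
  set A : ℝ := M ^ (-(2 : ℝ) * (i : ℝ)) with hA
  set B : ℝ := M ^ (-(2 : ℝ) * ((i : ℝ) - 1)) with hB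
  have hA0 : 0 < A := Real.rpow_pos_of_pos hM0 _
  have hB0 : 0 < B := Real.rpow_pos_of_pos hM0 _
  have hAB : A ≤ B := by
    apply Real.rpow_le_rpow_of_exponent_le hM.le
    linarith
  have hB1 : B ≤ 1 := by
    apply Real.rpow_le_one_of_one_le_of_nonpos hM.le
    have : (1:ℝ) ≤ (i:ℝ) := by exact_mod_cast hi
    linarith
  have hAN : A = (N ^ 2)⁻¹ := by
    rw [hA, hN, ← Real.rpow_natCast (M ^ (i:ℝ)) 2, ← Real.rpow_mul hM0.le,
      ← Real.rpow_neg hM0.le]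
    congr 1
    push_cast
    ring
  have hBN : B = M ^ 2 * (N ^ 2)⁻¹ := by
    rw [hB, show -(2:ℝ) * ((i:ℝ) - 1) = 2 + -(2:ℝ) * (i:ℝ) by ring, Real.rpow_add hM0, ← hA, hAN]
    congr 1
    rw [show (2:ℝ) = ((2:ℕ):ℝ) by norm_num, Real.rpow_natCast]
  have hrpow : M ^ (((d : ℝ) - 1) * (i : ℝ)) = N ^ (d - 1) := by
    have hcast : ((d:ℝ) - 1) = ((d - 1 : ℕ) : ℝ) := by
      have := Nat.cast_sub hd (R := ℝ)
      rw [this]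
      norm_num
    rw [hcast, mul_comm, Real.rpow_mul hM0.le, ← hN, Real.rpow_natCast]
  rw [hrpow]
  -- abbreviations
  set g : ℝ → ℝ := fun lam =>
    rexp (-1 * N * ∑ k : Fin d, circleDist (θ k - θ' k + lam)) with hg
  have hgcont : Continuous g := by
    apply Real.continuous_exp.comp
    apply Continuous.mul continuous_const
    apply continuous_finset_sum
    intro k _
    exact circleDist_continuous.comp (by fun_prop)
  have hIg0 : 0 ≤ ∫ lam in (0:ℝ)..(2 * π), g lam := by
    apply intervalIntegral.integral_nonneg (by positivity)
    intro lam _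
    exact (Real.exp_pos _).le
  have hIgint : IntervalIntegrable g volume 0 (2 * π) := hgcont.intervalIntegrable _ _
  set F : ℝ → ℝ := fun t => slicedProp d m M i (Function.update θ ℓ t) θ' with hF
  set C : ℝ := K * N ^ (d - 1) * ∫ lam in (0:ℝ)..(2 * π), g lam with hC
  have hC0 : 0 ≤ C := mul_nonneg (by positivity) hIg0
  show |deriv F (θ ℓ)| ≤ C
  -- the key difference estimate
  have key : ∀ h : ℝ, |F (θ ℓ + h) - F (θ ℓ)|
      ≤ rexp (h ^ 2 * N ^ 2 / 8) * C * |h| := by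
    intro h
    have hFdef : ∀ u, F u = ∫ α in A..B, rexp (-α * m ^ 2) *
        ∫ lam in (0:ℝ)..(2 * π), ∏ k : Fin d,
          heatK α (Function.update θ ℓ u k - θ' k + lam) := fun u => rfl
    have hcontα : ∀ u : ℝ, ContinuousOn (fun α => rexp (-α * m ^ 2) *
        ∫ lam in (0:ℝ)..(2 * π), ∏ k : Fin d,
          heatK α (Function.update θ ℓ u k - θ' k + lam)) (Set.Icc A B) := by
      intro u
      apply ContinuousOn.mul
      · exact (Real.continuous_exp.comp (by fun_prop)).continuousOn
      · exact prodHeat_contOn_param A B hA0 hAB (fun k => Function.update θ ℓ u k - θ' k)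
    have hii : ∀ u : ℝ, IntervalIntegrable (fun α => rexp (-α * m ^ 2) *
        ∫ lam in (0:ℝ)..(2 * π), ∏ k : Fin d,
          heatK α (Function.update θ ℓ u k - θ' k + lam)) volume A B := by
      intro u
      apply ContinuousOn.intervalIntegrable
      rw [Set.uIcc_of_le hAB]
      exact hcontα u
    rw [hFdef, hFdef, ← intervalIntegral.integral_sub (hii _) (hii _)]
    set W : ℝ := 10 ^ d * N ^ 2 * N ^ (d - 1) * rexp (h ^ 2 * N ^ 2 / 8) *
      rexp (8 * d * M ^ 2) * |h| with hW
    have hW0 : 0 ≤ W := by positivity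
    have hWIg0 : 0 ≤ W * ∫ lam in (0:ℝ)..(2 * π), g lam := mul_nonneg hW0 hIg0
    -- pointwise-in-α bound
    have hαbound : ∀ α ∈ Set.uIoc A B,
        ‖(rexp (-α * m ^ 2) * ∫ lam in (0:ℝ)..(2 * π), ∏ k : Fin d,
            heatK α (Function.update θ ℓ (θ ℓ + h) k - θ' k + lam)) -
          rexp (-α * m ^ 2) * ∫ lam in (0:ℝ)..(2 * π), ∏ k : Fin d,
            heatK α (Function.update θ ℓ (θ ℓ) k - θ' k + lam)‖
          ≤ W * ∫ lam in (0:ℝ)..(2 * π), g lam := by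
      intro α hα
      rw [Set.uIoc_of_le hAB] at hα
      have hα0 : 0 < α := lt_trans hA0 hα.1
      have hα1 : α ≤ 1 := le_trans hα.2 hB1
      have hαA' : (N ^ 2)⁻¹ ≤ α := by rw [← hAN]; exact hα.1.le
      have hαB' : α ≤ M ^ 2 * (N ^ 2)⁻¹ := by rw [← hBN]; exact hα.2
      have hupd : Function.update θ ℓ (θ ℓ) = θ := Function.update_eq_self ℓ θ
      rw [hupd, ← mul_sub, Real.norm_eq_abs, abs_mul, abs_of_pos (Real.exp_pos _)]
      have hexp1 : rexp (-α * m ^ 2) ≤ 1 := by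
        rw [← Real.exp_zero]
        apply Real.exp_le_exp.mpr
        nlinarith [sq_nonneg m]
      have hlamii : ∀ u : ℝ, IntervalIntegrable (fun lam => ∏ k : Fin d,
          heatK α (Function.update θ ℓ u k - θ' k + lam)) volume 0 (2 * π) :=
        fun u => (prodHeat_cont_lam α hα0
          (fun k => Function.update θ ℓ u k - θ' k)).intervalIntegrable _ _
      have hθii : IntervalIntegrable (fun lam => ∏ k : Fin d,
          heatK α (θ k - θ' k + lam)) volume 0 (2 * π) := by
        have := hlamii (θ ℓ)
        rwa [hupd] at this
      rw [← intervalIntegral.integral_sub (hlamii _) hθii]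
      have hptw : ∀ lam ∈ Set.uIoc (0:ℝ) (2 * π),
          ‖(∏ k : Fin d, heatK α (Function.update θ ℓ (θ ℓ + h) k - θ' k + lam)) -
            ∏ k : Fin d, heatK α (θ k - θ' k + lam)‖ ≤ W * g lam := by
        intro lam _
        rw [Real.norm_eq_abs]
        have := prod_diff_bound d hd ℓ θ θ' M N α h lam hM hN1 hα0 hα1 hαA' hαB'
        calc |(∏ k : Fin d, heatK α (Function.update θ ℓ (θ ℓ + h) k - θ' k + lam)) -
              ∏ k : Fin d, heatK α (θ k - θ' k + lam)|
            ≤ 10 ^ d * N ^ 2 * N ^ (d - 1) * rexp (h ^ 2 * N ^ 2 / 8) *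
                rexp (8 * d * M ^ 2) * |h| *
                rexp (-1 * N * ∑ k : Fin d, circleDist (θ k - θ' k + lam)) := this
          _ = W * g lam := by rw [hW, hg]
      have hgint : IntervalIntegrable g volume 0 (2 * π) :=
        hgcont.intervalIntegrable 0 (2 * π)
      have hnorm := intervalIntegral.norm_integral_le_abs_of_norm_le (μ := volume)
        (ae_restrict_of_forall_mem measurableSet_uIoc hptw)
        (hgint.const_mul W)
      rw [Real.norm_eq_abs] at hnorm
      have hgval : ∫ lam in (0:ℝ)..(2 * π), W * g lam
          = W * ∫ lam in (0:ℝ)..(2 * π), g lam := intervalIntegral.integral_const_mul _ _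
      rw [hgval, abs_of_nonneg hWIg0] at hnorm
      calc rexp (-α * m ^ 2) * |∫ lam in (0:ℝ)..(2 * π),
            ((∏ k : Fin d, heatK α (Function.update θ ℓ (θ ℓ + h) k - θ' k + lam)) -
              ∏ k : Fin d, heatK α (θ k - θ' k + lam))|
          ≤ 1 * (W * ∫ lam in (0:ℝ)..(2 * π), g lam) :=
            mul_le_mul hexp1 hnorm (abs_nonneg _) one_pos.le
        _ = W * ∫ lam in (0:ℝ)..(2 * π), g lam := one_mul _
    have hmain := intervalIntegral.norm_integral_le_abs_of_norm_le (μ := volume)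
      (ae_restrict_of_forall_mem measurableSet_uIoc hαbound)
      (intervalIntegrable_const (μ := volume) (c := W * ∫ lam in (0:ℝ)..(2 * π), g lam))
    rw [Real.norm_eq_abs] at hmain
    rw [intervalIntegral.integral_const, smul_eq_mul] at hmain
    have hBA : 0 ≤ B - A := by linarith
    rw [abs_of_nonneg (mul_nonneg hBA hWIg0)] at hmain
    refine hmain.trans ?_
    calc (B - A) * (W * ∫ lam in (0:ℝ)..(2 * π), g lam)
        ≤ B * (W * ∫ lam in (0:ℝ)..(2 * π), g lam) := by
          apply mul_le_mul_of_nonneg_right (by linarith) hWIg0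
      _ = rexp (h ^ 2 * N ^ 2 / 8) * C * |h| := by
          rw [hBN, hW, hC, hK]
          field_simp
  -- from the difference estimate to the derivative bound
  apply abs_deriv_le hC0
  intro ε hε
  set ρ : ℝ := Real.sqrt (8 * Real.log (1 + ε / (C + 1)) / N ^ 2) with hρd
  have hlogpos : 0 < Real.log (1 + ε / (C + 1)) := by
    apply Real.log_pos
    have : 0 < ε / (C + 1) := by positivity
    linarith
  have hρ0 : 0 < ρ := Real.sqrt_pos.mpr (by positivity)
  filter_upwards [Metric.ball_mem_nhds (θ ℓ) hρ0] with s hs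
  rw [Metric.mem_ball, Real.dist_eq] at hs
  have hsub : s = θ ℓ + (s - θ ℓ) := by ring
  have hkey := key (s - θ ℓ)
  rw [← hsub] at hkey
  refine hkey.trans ?_
  apply mul_le_mul_of_nonneg_right ?_ (abs_nonneg _)
  have hsq : (s - θ ℓ) ^ 2 ≤ ρ ^ 2 := by
    rw [← sq_abs]
    apply pow_le_pow_left₀ (abs_nonneg _) hs.le
  have hρsq : ρ ^ 2 = 8 * Real.log (1 + ε / (C + 1)) / N ^ 2 :=
    Real.sq_sqrt (by positivity)
  have hexp : rexp ((s - θ ℓ) ^ 2 * N ^ 2 / 8) ≤ 1 + ε / (C + 1) := by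
    rw [show (1:ℝ) + ε / (C + 1) = rexp (Real.log (1 + ε / (C + 1))) from
      (Real.exp_log (by positivity)).symm]
    apply Real.exp_le_exp.mpr
    have h1 : (s - θ ℓ) ^ 2 * N ^ 2 / 8 ≤ ρ ^ 2 * N ^ 2 / 8 := by gcongr
    rw [hρsq] at h1
    have h2 : 8 * Real.log (1 + ε / (C + 1)) / N ^ 2 * N ^ 2 / 8
        = Real.log (1 + ε / (C + 1)) := by
      field_simp
    linarith [h1, h2.le]
  calc rexp ((s - θ ℓ) ^ 2 * N ^ 2 / 8) * C ≤ (1 + ε / (C + 1)) * C :=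
        mul_le_mul_of_nonneg_right hexp hC0
    _ ≤ C + ε := by
        rw [add_mul, one_mul]
        have : ε / (C + 1) * C ≤ ε := by
          rw [div_mul_eq_mul_div, div_le_iff₀ (by positivity : (0:ℝ) < C + 1)]
          nlinarith
        linarith
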